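/- Let H be a real symmetric matrix indexed by a finite nonempty type V such that H_{u,v} ≤ 0 for all u ≠ v. Then there exists a unit eigenvector φ of H for its smallest eigenvalue λ₀(H) such that φ(u) ≥ 0 for all u ∈ V. -/

import Mathlib

open Matrix

/-- a real symmetric matrix with nonpositive off-diagonal entries has a
nonnegative unit eigenvector for its smallest eigenvalue `λ₀(H)`. -/
theorem exists_nonneg_ground_state {V : Type*} [Fintype V] [DecidableEq V] [Nonempty V]
    (H : Matrix V V ℝ) (hH : H.IsHermitian)
    (hoff : ∀ u v : V, u ≠ v → H u v ≤ 0) :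
    ∃ φ : V → ℝ, (∑ u, φ u ^ 2 = 1) ∧
      H.mulVec φ = (Finset.univ.inf' Finset.univ_nonempty hH.eigenvalues) • φ ∧
      ∀ u, 0 ≤ φ u := by
  set lam := Finset.univ.inf' Finset.univ_nonempty hH.eigenvalues with hlam
  obtain ⟨i, -, hi⟩ := Finset.exists_mem_eq_inf' Finset.univ_nonempty hH.eigenvalues
  set ψ : V → ℝ := ⇑(hH.eigenvectorBasis i) with hψ
  have hψnorm : ∑ u, ψ u ^ 2 = 1 := by
    have h1 : ‖hH.eigenvectorBasis i‖ = 1 := hH.eigenvectorBasis.orthonormal.1 i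
    have h2 : (inner ℝ (hH.eigenvectorBasis i) (hH.eigenvectorBasis i) : ℝ) = 1 := by
      rw [real_inner_self_eq_norm_sq, h1]; norm_num
    rw [PiLp.inner_apply] at h2
    simpa [pow_two] using h2
  have hψeig : H *ᵥ ψ = lam • ψ := by
    rw [hlam, hi]; exact hH.mulVec_eigenvectorBasis i
  set M : Matrix V V ℝ := H - lam • 1 with hM
  have hMψ : M *ᵥ ψ = 0 := by
    simp [hM, sub_mulVec, hψeig, smul_mulVec]
  have hMpsd : M.PosSemidef := by
    have hspec := hH.spectral_theorem
    have hU := (Matrix.mem_unitaryGroup_iff).mp (hH.eigenvectorUnitary).2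
    have : M = (hH.eigenvectorUnitary : Matrix V V ℝ) *
        diagonal (fun j => hH.eigenvalues j - lam) *
        (star (hH.eigenvectorUnitary : Matrix V V ℝ)) := by
      have h1 : (lam • (1 : Matrix V V ℝ)) =
          (hH.eigenvectorUnitary : Matrix V V ℝ) * (lam • 1) *
          (star (hH.eigenvectorUnitary : Matrix V V ℝ)) := by
        rw [mul_smul_comm, smul_mul_assoc, mul_one, hU]
      rw [hM]
      conv_lhs => rw [hspec, Unitary.conjStarAlgAut_apply, h1]
      rw [← Matrix.sub_mul, ← Matrix.mul_sub]
      congr 2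
      rw [smul_eq_diagonal_mul, mul_one, ← diagonal_sub]
      congr 1
    rw [this, Matrix.star_eq_conjTranspose]
    refine PosSemidef.mul_mul_conjTranspose_same ?_ _
    refine posSemidef_diagonal_iff.mpr fun j => ?_
    have : lam ≤ hH.eigenvalues j := Finset.inf'_le _ (Finset.mem_univ j)
    linarith
  set φ : V → ℝ := fun u => |ψ u| with hφ
  refine ⟨φ, ?_, ?_, fun u => abs_nonneg _⟩
  · simpa [hφ, sq_abs] using hψnorm
  have hψMψ : ψ ⬝ᵥ M *ᵥ ψ = 0 := by rw [hMψ, dotProduct_zero]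
  have key : φ ⬝ᵥ M *ᵥ φ ≤ ψ ⬝ᵥ M *ᵥ ψ := by
    simp only [dotProduct, mulVec, Finset.mul_sum]
    refine Finset.sum_le_sum fun u _ => Finset.sum_le_sum fun v _ => ?_
    rcases eq_or_ne u v with rfl | huv
    · have habs : φ u * φ u = ψ u * ψ u := abs_mul_abs_self _
      calc φ u * (M u u * φ u) = M u u * (φ u * φ u) := by ring
        _ = M u u * (ψ u * ψ u) := by rw [habs]
        _ = ψ u * (M u u * ψ u) := by ring
        _ ≤ ψ u * (M u u * ψ u) := le_rfl
    · have hMuv : M u v ≤ 0 := by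
        have : M u v = H u v := by simp [hM, one_apply, huv]
        rw [this]; exact hoff u v huv
      have habs : ψ u * ψ v ≤ φ u * φ v := by
        calc ψ u * ψ v ≤ |ψ u * ψ v| := le_abs_self _
        _ = φ u * φ v := by rw [abs_mul]
      calc φ u * (M u v * φ v) = M u v * (φ u * φ v) := by ring
        _ ≤ M u v * (ψ u * ψ v) := mul_le_mul_of_nonpos_left habs hMuv
        _ = ψ u * (M u v * ψ v) := by ring
  have hφMφ0 : φ ⬝ᵥ M *ᵥ φ = 0 := by
    have h0 : 0 ≤ φ ⬝ᵥ M *ᵥ φ := by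
      have := hMpsd.dotProduct_mulVec_nonneg φ
      simpa using this
    linarith [key, hψMψ.le, hψMψ.ge]
  have hMφ : M *ᵥ φ = 0 := by
    have := (hMpsd.dotProduct_mulVec_zero_iff φ).mp ?_
    · exact this
    · simpa using hφMφ0
  have : H *ᵥ φ - lam • φ = 0 := by
    have := hMφ
    rwa [hM, sub_mulVec, smul_mulVec, one_mulVec] at this
  exact sub_eq_zero.mp this
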